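/- arXiv:1912.01433 — 2 statements merged into one kernel-verified Lean document; each statement's English description precedes it below -/
import Mathlib

section
/- Let J = J(D, λ) be a first Tits construction. For a, b, c ∈ D× with N_D(a) = N_D(b)N_D(c) and γ ∈ k×, the map (x,y,z) ↦ γ(axb, b^# y c, c^{-1} z a^#) is a norm similarity: N(ψ((x,y,z))) = γ³ N_D(a)N_D(b) · N((x,y,z)). -/
open Matrix

/-- The norm of the first Tits construction `J(D, λ) = D ⊕ D ⊕ D`, with
`D = Mat₃(k)`, `N_D = det`, `T_D = trace`. -/
noncomputable def titsNorm {k : Type*} [Field k] (l : k)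
    (v : Matrix (Fin 3) (Fin 3) k × Matrix (Fin 3) (Fin 3) k × Matrix (Fin 3) (Fin 3) k) : k :=
  v.1.det + l * v.2.1.det + l⁻¹ * v.2.2.det - (v.1 * v.2.1 * v.2.2).trace

/-- For `a, b, c ∈ D×` with `N_D(a) = N_D(b) N_D(c)` and `γ ∈ k×`, the map
`(x,y,z) ↦ γ (a x b, b^# y c, c⁻¹ z a^#)` is a norm similarity of `J(D,λ)`
with multiplier `γ³ N_D(a) N_D(b)`. -/
theorem titsNorm_similarity {k : Type*} [Field k] (l : k) (hl : l ≠ 0)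
    (a b c : Matrix (Fin 3) (Fin 3) k) (γ : k) (hγ : γ ≠ 0)
    (ha : IsUnit a) (hb : IsUnit b) (hc : IsUnit c)
    (hdet : a.det = b.det * c.det)
    (x y z : Matrix (Fin 3) (Fin 3) k) :
    titsNorm l (γ • (a * x * b), γ • (b.adjugate * y * c), γ • (c⁻¹ * z * a.adjugate))
      = γ ^ 3 * (a.det * b.det) * titsNorm l (x, y, z) := by
  have hcd : c.det ≠ 0 := by
    simpa using ((isUnit_iff_isUnit_det c).mp hc).ne_zero
  have hcc : c * c⁻¹ = 1 := mul_nonsing_inv c ((isUnit_iff_isUnit_det c).mp hc)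
  have hprod : (a * x * b) * (b.adjugate * y * c) * (c⁻¹ * z * a.adjugate)
      = b.det • (a * (x * (y * (z * a.adjugate)))) := by
    have hbb : b * b.adjugate = b.det • 1 := mul_adjugate b
    calc (a * x * b) * (b.adjugate * y * c) * (c⁻¹ * z * a.adjugate)
        = a * x * (b * b.adjugate) * y * (c * c⁻¹) * z * a.adjugate := by
          noncomm_ring
      _ = b.det • (a * (x * (y * (z * a.adjugate)))) := by
          rw [hbb, hcc]
          simp [Matrix.smul_mul, Matrix.mul_smul, mul_assoc]
  have htr : ((a * x * b) * (b.adjugate * y * c) * (c⁻¹ * z * a.adjugate)).trace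
      = b.det * (a.det * (x * y * z).trace) := by
    rw [hprod, trace_smul, smul_eq_mul]
    congr 1
    have : a * (x * (y * (z * a.adjugate))) = (a * (x * (y * z))) * a.adjugate := by
      noncomm_ring
    rw [this, trace_mul_comm, ← mul_assoc, adjugate_mul, Matrix.smul_mul, trace_smul,
      smul_eq_mul, one_mul]
    ring_nf
    rw [mul_assoc]
  have htr2 : ((γ • (a * x * b)) * (γ • (b.adjugate * y * c)) * (γ • (c⁻¹ * z * a.adjugate))).trace
      = γ ^ 3 * (b.det * (a.det * (x * y * z).trace)) := by
    simp only [Matrix.smul_mul, Matrix.mul_smul, trace_smul, smul_eq_mul, htr]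
    ring
  simp only [titsNorm, det_smul, det_mul, det_adjugate, det_nonsing_inv, Ring.inverse_eq_inv, htr2,
    smul_eq_mul, Fintype.card_fin]
  field_simp
  rw [hdet]
  ring
end

section
/- In the first Tits construction J(D,λ), for p ∈ D× with N_D(p) = 1, the map J_p : (x,y,z) ↦ (x, yp, p^{-1}z) preserves the norm N and fixes the identity element (1,0,0); hence it is an automorphism of the cubic norm structure. -/
open Matrix

/-- The adjoint of the first Tits construction:
`(x,y,z)^# = (x^# − yz, λ⁻¹ z^# − xy, λ y^# − zx)`. -/
noncomputable def titsSharp {k : Type*} [Field k] (l : k)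
    (v : Matrix (Fin 3) (Fin 3) k × Matrix (Fin 3) (Fin 3) k × Matrix (Fin 3) (Fin 3) k) :
    Matrix (Fin 3) (Fin 3) k × Matrix (Fin 3) (Fin 3) k × Matrix (Fin 3) (Fin 3) k :=
  (v.1.adjugate - v.2.1 * v.2.2, l⁻¹ • v.2.2.adjugate - v.1 * v.2.1,
    l • v.2.1.adjugate - v.2.2 * v.1)

/-- For `p ∈ D×` with `N_D(p) = 1`, the map `J_p : (x,y,z) ↦ (x, y p, p⁻¹ z)`
preserves the norm `N` of `J(D,λ)`, fixes the identity `(1,0,0)`, and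
preserves the adjoint map; hence it is an automorphism of the cubic norm
structure. -/
theorem titsJ_p_automorphism {k : Type*} [Field k] (l : k) (hl : l ≠ 0)
    (p : Matrix (Fin 3) (Fin 3) k) (hp : p.det = 1) :
    (∀ x y z : Matrix (Fin 3) (Fin 3) k,
        titsNorm l (x, y * p, p⁻¹ * z) = titsNorm l (x, y, z)) ∧
    ((fun v : Matrix (Fin 3) (Fin 3) k × Matrix (Fin 3) (Fin 3) k × Matrix (Fin 3) (Fin 3) k =>
        (v.1, v.2.1 * p, p⁻¹ * v.2.2)) (1, 0, 0) = (1, 0, 0)) ∧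
    (∀ x y z : Matrix (Fin 3) (Fin 3) k,
        titsSharp l (x, y * p, p⁻¹ * z)
          = (fun v : Matrix (Fin 3) (Fin 3) k × Matrix (Fin 3) (Fin 3) k × Matrix (Fin 3) (Fin 3) k =>
              (v.1, v.2.1 * p, p⁻¹ * v.2.2)) (titsSharp l (x, y, z))) := by
  have hpu : IsUnit p.det := by simp [hp]
  have hinv : p * p⁻¹ = 1 := Matrix.mul_nonsing_inv p hpu
  have hdetinv : (p⁻¹).det = 1 := by
    rw [Matrix.det_nonsing_inv, hp, Ring.inverse_one]
  have hadjp : p.adjugate = p⁻¹ := by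
    rw [Matrix.inv_def, hp, Ring.inverse_one, one_smul]
  have hadjpi : (p⁻¹).adjugate = p := by
    have h := Matrix.inv_def (p⁻¹)
    rw [hdetinv, Ring.inverse_one, one_smul] at h
    rw [← h, Matrix.nonsing_inv_nonsing_inv p hpu]
  have key : ∀ x y z : Matrix (Fin 3) (Fin 3) k,
      x * (y * p) * (p⁻¹ * z) = x * y * z := by
    intro x y z
    calc x * (y * p) * (p⁻¹ * z) = x * y * (p * p⁻¹) * z := by noncomm_ring
    _ = x * y * z := by rw [hinv]; noncomm_ring
  refine ⟨fun x y z => ?_, by simp, fun x y z => ?_⟩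
  · simp only [titsNorm, Matrix.det_mul, hp, hdetinv, mul_one, one_mul, key]
  · simp only [titsSharp, Matrix.adjugate_mul_distrib, hadjp, hadjpi]
    refine Prod.ext ?_ (Prod.ext ?_ ?_) <;> simp only
    · have : y * p * (p⁻¹ * z) = y * z := by
        calc y * p * (p⁻¹ * z) = y * (p * p⁻¹) * z := by noncomm_ring
        _ = y * z := by rw [hinv]; noncomm_ring
      rw [this]
    · rw [sub_mul, smul_mul_assoc]; noncomm_ring
    · rw [mul_sub, mul_smul_comm]; noncomm_ring
end
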